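/- The Generalized Lamport's Bakery (GLB) algorithm satisfies the Concurrent Entry property: in any execution, if a process P_i is in the entry section and throughout that period every other process P_j satisfies Session[j] ∈ {0, mysession of P_i} (i.e., there is no conflicting process), then P_i enters the critical section within a bounded number of its own steps. -/
import Mathlib


/-! ## Model of the Generalized Lamport's Bakery (GLB) algorithm -/

/-- Program counter of a process in the GLB algorithm.  The doorway is
`setChoosing s` (Choosing[i]:=true), `setSession s` (Session[i]:=s),
`scan s j m` (computing the max of the other token numbers, `j` is the next index
to inspect and `m` the running maximum), `setToken s m` (Token[i]:=m+1) and
`unsetChoosing s` (Choosing[i]:=false).  The waiting room consists of the two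
busy-wait checks `wait1 s j` and `wait2 s j`, and the exit section of
`exit1` (Token[i]:=0) and `exit2` (Session[i]:=0). -/
inductive GLBPc : Type
  | remainder
  | setChoosing (s : ℕ)
  | setSession (s : ℕ)
  | scan (s : ℕ) (j : ℕ) (m : ℕ)
  | setToken (s : ℕ) (m : ℕ)
  | unsetChoosing (s : ℕ)
  | wait1 (s : ℕ) (j : ℕ)
  | wait2 (s : ℕ) (j : ℕ)
  | cs (s : ℕ)
  | exit1
  | exit2
  deriving DecidableEq

/-- Global state: the shared arrays together with each process's control state. -/
structure GLBState (N : ℕ) where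
  session : Fin N → ℕ
  token : Fin N → ℕ
  choosing : Fin N → Bool
  pc : Fin N → GLBPc

def glbInit (N : ℕ) : GLBState N :=
  { session := fun _ => 0, token := fun _ => 0, choosing := fun _ => false,
    pc := fun _ => GLBPc.remainder }

/-- One atomic step of process `i` of the GLB algorithm, transforming state `st`
into `st'`.  A process at `remainder` may stay put or pick an arbitrary positive
session; a failed busy-wait check is a stuttering step; a process in the CS may
stay or move to the exit section. -/
def glbStep {N : ℕ} (st : GLBState N) (i : Fin N) (st' : GLBState N) : Prop :=
  match st.pc i with
  | .remainder =>
      st' = st ∨ ∃ s : ℕ, 0 < s ∧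
        st' = { st with pc := Function.update st.pc i (.setChoosing s) }
  | .setChoosing s =>
      st' = { st with choosing := Function.update st.choosing i true,
                      pc := Function.update st.pc i (.setSession s) }
  | .setSession s =>
      st' = { st with session := Function.update st.session i s,
                      pc := Function.update st.pc i (.scan s 0 0) }
  | .scan s j m =>
      if h : j < N then
        st' = { st with pc := Function.update st.pc i (.scan s (j+1)
                  (if (⟨j, h⟩ : Fin N) = i then m else max m (st.token ⟨j, h⟩))) }
      else
        st' = { st with pc := Function.update st.pc i (.setToken s m) }
  | .setToken s m =>
      st' = { st with token := Function.update st.token i (m + 1),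
                      pc := Function.update st.pc i (.unsetChoosing s) }
  | .unsetChoosing s =>
      st' = { st with choosing := Function.update st.choosing i false,
                      pc := Function.update st.pc i (.wait1 s 0) }
  | .wait1 s j =>
      if h : j < N then
        if st.choosing ⟨j, h⟩ = false ∨ st.session ⟨j, h⟩ = 0 ∨ st.session ⟨j, h⟩ = s then
          st' = { st with pc := Function.update st.pc i (.wait2 s j) }
        else st' = st
      else
        st' = { st with pc := Function.update st.pc i (.cs s) }
  | .wait2 s j =>
      if h : j < N then
        if (st.token i < st.token ⟨j, h⟩ ∨ (st.token i = st.token ⟨j, h⟩ ∧ i.val < j)) ∨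
            st.token ⟨j, h⟩ = 0 ∨ st.session ⟨j, h⟩ = 0 ∨ st.session ⟨j, h⟩ = s then
          st' = { st with pc := Function.update st.pc i (.wait1 s (j+1)) }
        else st' = st
      else st' = st
  | .cs _ =>
      st' = st ∨ st' = { st with pc := Function.update st.pc i .exit1 }
  | .exit1 =>
      st' = { st with token := Function.update st.token i 0,
                      pc := Function.update st.pc i .exit2 }
  | .exit2 =>
      st' = { st with session := Function.update st.session i 0,
                      pc := Function.update st.pc i .remainder }

/-- An execution of the GLB algorithm: an interleaving of atomic steps
(`sched n` is the process taking the `n`-th step), starting from the initial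
state, in which every process outside its remainder section eventually takes
its next step. -/
structure GLBExec (N : ℕ) where
  state : ℕ → GLBState N
  sched : ℕ → Fin N
  init : state 0 = glbInit N
  step : ∀ n, glbStep (state n) (sched n) (state (n + 1))
  fair : ∀ (i : Fin N) (n : ℕ), (state n).pc i ≠ GLBPc.remainder →
           ∃ m, n ≤ m ∧ sched m = i

/-- Process `i` is in the critical section. -/
def glbInCS {N : ℕ} (st : GLBState N) (i : Fin N) : Prop := ∃ s, st.pc i = GLBPc.cs s

/-- Process `i` is in the entry section (doorway or waiting room). -/
def glbInEntry {N : ℕ} (st : GLBState N) (i : Fin N) : Prop :=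
  match st.pc i with
  | .remainder => False
  | .cs _ => False
  | .exit1 => False
  | .exit2 => False
  | _ => True

/-- At step `n`, process `i` leaves the remainder and enters the doorway,
requesting session `s`. -/
def glbEntersDoorway {N : ℕ} (e : GLBExec N) (i : Fin N) (s : ℕ) (n : ℕ) : Prop :=
  (e.state n).pc i = GLBPc.remainder ∧ (e.state (n+1)).pc i = GLBPc.setChoosing s

/-- At step `n`, process `i` completes its doorway (executes Choosing[i]:=false). -/
def glbCompletesDoorway {N : ℕ} (e : GLBExec N) (i : Fin N) (s : ℕ) (n : ℕ) : Prop :=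
  (e.state n).pc i = GLBPc.unsetChoosing s ∧ (e.state (n+1)).pc i = GLBPc.wait1 s 0

/-- At step `n`, process `i` enters the critical section. -/
def glbEntersCS {N : ℕ} (e : GLBExec N) (i : Fin N) (n : ℕ) : Prop :=
  ¬ glbInCS (e.state n) i ∧ glbInCS (e.state (n+1)) i

/-- Process `i` does not pass through the remainder section during `(a, b]`
(so times `a` and `b` belong to the same invocation of `i`). -/
def glbActiveThrough {N : ℕ} (e : GLBExec N) (i : Fin N) (a b : ℕ) : Prop :=
  ∀ k, a < k → k ≤ b → (e.state k).pc i ≠ GLBPc.remainder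

/-! ### Remote memory references in the cache-coherent (CC) model -/

/-- The shared variables of the GLB algorithm. -/
inductive GLBVar (N : ℕ) : Type
  | session (j : Fin N)
  | token (j : Fin N)
  | choosing (j : Fin N)
  deriving DecidableEq

/-- Shared variables read by the next step of process `i` in state `st`. -/
def glbReads {N : ℕ} (st : GLBState N) (i : Fin N) : Finset (GLBVar N) :=
  match st.pc i with
  | .scan _ j _ => if h : j < N then {GLBVar.token ⟨j, h⟩} else ∅
  | .wait1 _ j => if h : j < N then {GLBVar.choosing ⟨j, h⟩, GLBVar.session ⟨j, h⟩} else ∅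
  | .wait2 _ j => if h : j < N then
      {GLBVar.token i, GLBVar.token ⟨j, h⟩, GLBVar.session ⟨j, h⟩} else ∅
  | _ => ∅

/-- Shared variables written by the next step of process `i` in state `st`. -/
def glbWrites {N : ℕ} (st : GLBState N) (i : Fin N) : Finset (GLBVar N) :=
  match st.pc i with
  | .setChoosing _ => {GLBVar.choosing i}
  | .setSession _ => {GLBVar.session i}
  | .setToken _ _ => {GLBVar.token i}
  | .unsetChoosing _ => {GLBVar.choosing i}
  | .exit1 => {GLBVar.token i}
  | .exit2 => {GLBVar.session i}
  | _ => ∅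

/-- `glbCached e n p v` holds iff just before step `n`, process `p` holds a valid
cached copy of variable `v`: a copy is acquired by reading `v` and stays valid
until some process writes `v`. -/
def glbCached {N : ℕ} (e : GLBExec N) : ℕ → Fin N → GLBVar N → Bool
  | 0, _, _ => false
  | n + 1, p, v =>
      (glbCached e n p v || (decide (e.sched n = p) && decide (v ∈ glbReads (e.state n) p)))
        && ! decide (v ∈ glbWrites (e.state n) (e.sched n))

/-- The number of remote memory references incurred by step `n` of the execution:
every write is an RMR, and a read is an RMR iff the stepping process holds no
valid cached copy. -/
def glbStepRMR {N : ℕ} (e : GLBExec N) (n : ℕ) : ℕ :=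
  (glbWrites (e.state n) (e.sched n)).card +
    ((glbReads (e.state n) (e.sched n)).filter
      (fun v => glbCached e n (e.sched n) v = false)).card

/-! ### Auxiliary machinery for the concurrent-entry proof -/

/-- Progress measure: number of remaining own steps to reach the CS. -/
def glbMu (N : ℕ) : GLBPc → ℕ
  | .setChoosing _ => 3*N+6
  | .setSession _ => 3*N+5
  | .scan _ j _ => 3*N+4 - j
  | .setToken _ _ => 2*N+3
  | .unsetChoosing _ => 2*N+2
  | .wait1 _ j => 2*(N-j)+1
  | .wait2 _ j => 2*(N-j)
  | _ => 0

/-- Invariant for process `i` while in the entry section requesting session `s`. -/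
def GLBGoodEntry (N : ℕ) (st : GLBState N) (i : Fin N) (s : ℕ) : Prop :=
  (st.pc i = .setChoosing s) ∨ (st.pc i = .setSession s) ∨
  (∃ j m, j ≤ N ∧ st.pc i = .scan s j m ∧ st.session i = s) ∨
  (∃ m, st.pc i = .setToken s m ∧ st.session i = s) ∨
  (st.pc i = .unsetChoosing s ∧ st.session i = s) ∨
  (∃ j, j ≤ N ∧ st.pc i = .wait1 s j ∧ st.session i = s) ∨
  (∃ j, j < N ∧ st.pc i = .wait2 s j ∧ st.session i = s)

lemma glbGoodEntry_inEntry {N : ℕ} {st : GLBState N} {i : Fin N} {s : ℕ}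
    (h : GLBGoodEntry N st i s) : glbInEntry st i := by
  rcases h with h|h|⟨j,m,_,h,_⟩|⟨m,h,_⟩|⟨h,_⟩|⟨j,_,h,_⟩|⟨j,_,h,_⟩ <;> simp [glbInEntry, h]

lemma glbGoodEntry_of_eq {N : ℕ} {st st' : GLBState N} {i : Fin N} {s : ℕ}
    (hpc : st'.pc i = st.pc i) (hs : st'.session i = st.session i)
    (h : GLBGoodEntry N st i s) : GLBGoodEntry N st' i s := by
  unfold GLBGoodEntry at *; rw [hpc, hs]; exact h

/-- Frame: a step of another process leaves `pc i` and `session i` unchanged. -/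
lemma glb_frame {N : ℕ} {st st' : GLBState N} {p i : Fin N}
    (h : glbStep st p st') (hip : i ≠ p) :
    st'.pc i = st.pc i ∧ st'.session i = st.session i := by
  unfold glbStep at h
  rcases hpc : st.pc p <;> simp only [hpc] at h <;>
    [rcases h with rfl | ⟨s, -, rfl⟩; skip; skip; skip; skip; skip; skip; skip;
      rcases h with rfl | rfl; skip; skip] <;>
  · repeat' split at h
    all_goals (first | subst h | rfl | skip)
    all_goals constructor <;> simp [Function.update_apply, hip]

/-- Progress: under the no-conflict hypothesis, every own step of a good process
either strictly decreases the measure or enters the CS. -/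
lemma glb_progress {N : ℕ} {st st' : GLBState N} {i : Fin N} {s : ℕ}
    (hg : GLBGoodEntry N st i s)
    (hs : ∀ j, j ≠ i → st.session j = 0 ∨ st.session j = s)
    (h : glbStep st i st') :
    (GLBGoodEntry N st' i s ∧ glbMu N (st'.pc i) < glbMu N (st.pc i)) ∨
      st'.pc i = .cs s := by
  unfold glbStep at h
  rcases hg with hpc|hpc|⟨j,m,hj,hpc,hsi⟩|⟨m,hpc,hsi⟩|⟨hpc,hsi⟩|⟨j,hj,hpc,hsi⟩|⟨j,hj,hpc,hsi⟩ <;>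
    simp only [hpc] at h
  · subst h
    exact Or.inl ⟨Or.inr (Or.inl (by simp)), by simp [glbMu, hpc] <;> omega⟩
  · subst h
    refine Or.inl ⟨Or.inr (Or.inr (Or.inl ⟨0, 0, by omega, by simp, by simp⟩)),
      by simp [glbMu, hpc] <;> omega⟩
  · by_cases hjN : j < N
    · rw [dif_pos hjN] at h; subst h
      refine Or.inl ⟨Or.inr (Or.inr (Or.inl ⟨j+1,
        (if (⟨j, hjN⟩ : Fin N) = i then m else max m (st.token ⟨j, hjN⟩)),
        by omega, by simp, by simpa using hsi⟩)), ?_⟩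
      simp [glbMu, hpc] <;> omega
    · rw [dif_neg hjN] at h; subst h
      refine Or.inl ⟨Or.inr (Or.inr (Or.inr (Or.inl ⟨m, by simp, by simpa using hsi⟩))),
        ?_⟩
      simp [glbMu, hpc] <;> omega
  · subst h
    exact Or.inl ⟨Or.inr (Or.inr (Or.inr (Or.inr (Or.inl ⟨by simp, by simpa using hsi⟩)))),
      by simp [glbMu, hpc]⟩
  · subst h
    exact Or.inl ⟨Or.inr (Or.inr (Or.inr (Or.inr (Or.inr (Or.inl
      ⟨0, by omega, by simp, by simpa using hsi⟩))))), by simp [glbMu, hpc] <;> omega⟩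
  · by_cases hjN : j < N
    · have hcond : st.choosing ⟨j, hjN⟩ = false ∨ st.session ⟨j, hjN⟩ = 0 ∨
          st.session ⟨j, hjN⟩ = s := by
        by_cases hji : (⟨j, hjN⟩ : Fin N) = i
        · right; right; rw [hji]; exact hsi
        · rcases hs _ hji with h0 | h0
          · exact Or.inr (Or.inl h0)
          · exact Or.inr (Or.inr h0)
      rw [dif_pos hjN, if_pos hcond] at h; subst h
      refine Or.inl ⟨Or.inr (Or.inr (Or.inr (Or.inr (Or.inr (Or.inr
        ⟨j, hjN, by simp, by simpa using hsi⟩))))), ?_⟩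
      simp [glbMu, hpc] <;> omega
    · rw [dif_neg hjN] at h; subst h
      right; simp
  · have hcond : (st.token i < st.token ⟨j, hj⟩ ∨
        (st.token i = st.token ⟨j, hj⟩ ∧ i.val < j)) ∨
        st.token ⟨j, hj⟩ = 0 ∨ st.session ⟨j, hj⟩ = 0 ∨ st.session ⟨j, hj⟩ = s := by
      by_cases hji : (⟨j, hj⟩ : Fin N) = i
      · right; right; right; rw [hji]; exact hsi
      · rcases hs _ hji with h0 | h0
        · exact Or.inr (Or.inr (Or.inl h0))
        · exact Or.inr (Or.inr (Or.inr h0))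
    rw [dif_pos hj, if_pos hcond] at h; subst h
    refine Or.inl ⟨Or.inr (Or.inr (Or.inr (Or.inr (Or.inr (Or.inl
      ⟨j+1, by omega, by simp, by simpa using hsi⟩))))), ?_⟩
    simp [glbMu, hpc] <;> omega

/-- **Concurrent entry for the GLB algorithm.**  There is a bound `B` (depending only on
`N`) such that in every execution, if process `i` enters the entry section requesting
session `s` and, throughout the period it is in the entry section, every other process `j`
has `Session[j] ∈ {0, s}` (no conflicting process), then `i` enters the critical section
within `B` of its own steps. -/
theorem glb_concurrent_entry (N : ℕ) :
    ∃ B : ℕ, ∀ (e : GLBExec N) (i : Fin N) (s : ℕ) (n : ℕ),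
      glbEntersDoorway e i s n →
      (∀ m, n < m → glbInEntry (e.state m) i →
        ∀ j, j ≠ i → (e.state m).session j = 0 ∨ (e.state m).session j = s) →
      ∀ m, n ≤ m →
        B ≤ ((Finset.Ico n m).filter (fun k => e.sched k = i)).card →
        ∃ c, n ≤ c ∧ c ≤ m ∧ glbInCS (e.state c) i := by
  refine ⟨3*N+8, ?_⟩
  intro e i s n hdoor hconf m hnm hcount
  have cnt_succ : ∀ a k : ℕ, a ≤ k →
      ((Finset.Ico a (k+1)).filter (fun t => e.sched t = i)).card =
        ((Finset.Ico a k).filter (fun t => e.sched t = i)).card +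
          (if e.sched k = i then 1 else 0) := by
    intro a k hak
    have hI : Finset.Ico a (k+1) = insert k (Finset.Ico a k) := by
      ext x; simp only [Finset.mem_Ico, Finset.mem_insert]; omega
    rw [hI, Finset.filter_insert]
    split <;> rename_i h
    · rw [Finset.card_insert_of_notMem (by simp)]
      try simp [h]
    · simp [h]
  have main : ∀ k, n+1 ≤ k →
      (∃ c, n ≤ c ∧ c ≤ k ∧ glbInCS (e.state c) i) ∨
      (GLBGoodEntry N (e.state k) i s ∧
        glbMu N ((e.state k).pc i) +
          ((Finset.Ico (n+1) k).filter (fun t => e.sched t = i)).card ≤ 3*N+6) := by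
    intro k hk
    induction k, hk using Nat.le_induction with
    | base =>
      right
      refine ⟨Or.inl hdoor.2, ?_⟩
      simp [glbMu, hdoor.2]
    | succ k hk ih =>
      rcases ih with ⟨c, hc1, hc2, hc3⟩ | ⟨hg, hb⟩
      · exact Or.inl ⟨c, hc1, by omega, hc3⟩
      by_cases hsch : e.sched k = i
      · have hstep := e.step k
        rw [hsch] at hstep
        have hent : glbInEntry (e.state k) i := glbGoodEntry_inEntry hg
        have hsk : ∀ j, j ≠ i → (e.state k).session j = 0 ∨ (e.state k).session j = s :=
          hconf k (by omega) hent
        rcases glb_progress hg hsk hstep with ⟨hg', hmu⟩ | hcs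
        · right
          refine ⟨hg', ?_⟩
          rw [cnt_succ _ _ hk, if_pos hsch]
          omega
        · exact Or.inl ⟨k+1, by omega, le_refl _, ⟨s, hcs⟩⟩
      · have hfr := glb_frame (e.step k) (fun h => hsch h.symm)
        right
        refine ⟨glbGoodEntry_of_eq hfr.1 hfr.2 hg, ?_⟩
        rw [cnt_succ _ _ hk, if_neg hsch, hfr.1]
        omega
  by_cases hm : n+1 ≤ m
  · rcases main m hm with ⟨c, hc1, hc2, hc3⟩ | ⟨hg, hb⟩
    · exact ⟨c, hc1, hc2, hc3⟩
    · exfalso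
      have h1 : Finset.Ico n m = insert n (Finset.Ico (n+1) m) := by
        ext x; simp only [Finset.mem_Ico, Finset.mem_insert]; omega
      have h2 : ((Finset.Ico n m).filter (fun t => e.sched t = i)).card ≤
          ((Finset.Ico (n+1) m).filter (fun t => e.sched t = i)).card + 1 := by
        rw [h1, Finset.filter_insert]
        split
        · exact Finset.card_insert_le _ _
        · omega
      omega
  · exfalso
    have hmn : m = n := by omega
    subst hmn
    simp only [Finset.Ico_self, Finset.filter_empty, Finset.card_empty] at hcount
    omega
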